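/- For every c ∈ (0, c₀(τ)), the equation Δ_c(λ,τ) = 0 has a complex solution λ in the domain Ω := {λ ∈ ℂ : Re λ > 0, 0 < Im λ < π/(cτ)}. -/

import Mathlib

open Set Filter

/-- Assumption (H): Fisher–KPP type structure on the nonlinearity `f`:
`f ∈ C^{1+ν}([0,∞))`, `f(0)=0`, `f'(0) - d > 0`, `f(s) = d·s` has a unique positive
root `u*`, `f` is increasing on `[0,u*]` and `s ↦ f(s)/s` is decreasing on `(0,u*]`. -/
def HypH (d : ℝ) (f : ℝ → ℝ) (ustar : ℝ) : Prop :=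
  0 < d ∧
  DifferentiableOn ℝ f (Set.Ici 0) ∧
  (∃ ν C : ℝ, 0 < ν ∧ ν < 1 ∧ ∀ s ∈ Set.Ici (0 : ℝ), ∀ t ∈ Set.Ici (0 : ℝ),
      |derivWithin f (Set.Ici 0) s - derivWithin f (Set.Ici 0) t| ≤ C * |s - t| ^ ν) ∧
  f 0 = 0 ∧
  d < derivWithin f (Set.Ici 0) 0 ∧
  0 < ustar ∧ f ustar = d * ustar ∧
  (∀ s : ℝ, 0 < s → f s = d * s → s = ustar) ∧
  MonotoneOn f (Set.Icc 0 ustar) ∧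
  AntitoneOn (fun s => f s / s) (Set.Ioc 0 ustar)

/-- Conditions (1.11) on the initial data `(φ, g, h)` over the history interval `[-τ,0]`. -/
def InitData (τ ustar : ℝ) (φ : ℝ → ℝ → ℝ) (g h : ℝ → ℝ) : Prop :=
  (∀ θ ∈ Set.Icc (-τ) 0, g θ < h θ) ∧
  (∀ θ ∈ Set.Icc (-τ) 0, ContDiffOn ℝ 2 (φ θ) (Set.Icc (g θ) (h θ))) ∧
  (∀ x : ℝ, DifferentiableOn ℝ (fun θ => φ θ x) (Set.Icc (-τ) 0)) ∧
  (∀ θ ∈ Set.Icc (-τ) 0, ∀ x ∈ Set.Ioo (g θ) (h θ), 0 < φ θ x ∧ φ θ x ≤ ustar) ∧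
  (∀ θ ∈ Set.Icc (-τ) 0, ∀ x : ℝ, x ∉ Set.Ioo (g θ) (h θ) → φ θ x = 0)

/-- Compatible condition (1.12): `[g(θ), h(θ)] ⊆ [g(0), h(0)]` for `θ ∈ [-τ,0]`. -/
def Compat (τ : ℝ) (g h : ℝ → ℝ) : Prop :=
  ∀ θ ∈ Set.Icc (-τ) 0, Set.Icc (g θ) (h θ) ⊆ Set.Icc (g 0) (h 0)

/-- `(u, g, h)` solves the free boundary problem (P) with initial data `φ`,
with `u` extended by `0` outside `(g(t), h(t))`. -/
structure SolP (d τ μ : ℝ) (f : ℝ → ℝ) (φ : ℝ → ℝ → ℝ)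
    (u : ℝ → ℝ → ℝ) (g h : ℝ → ℝ) : Prop where
  interval : ∀ t > 0, g t < h t
  diff_x : ∀ t > 0, ∀ x ∈ Set.Icc (g t) (h t),
    DifferentiableAt ℝ (u t) x ∧ DifferentiableAt ℝ (deriv (u t)) x
  pde : ∀ t > 0, ∀ x ∈ Set.Ioo (g t) (h t),
    HasDerivAt (fun s => u s x)
      (deriv (deriv (u t)) x - d * u t x + f (u (t - τ) x)) t
  bc_left : ∀ t > 0, u t (g t) = 0
  bc_right : ∀ t > 0, u t (h t) = 0
  fb_left : ∀ t > 0, HasDerivAt g (-μ * deriv (u t) (g t)) t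
  fb_right : ∀ t > 0, HasDerivAt h (-μ * deriv (u t) (h t)) t
  init : ∀ θ ∈ Set.Icc (-τ) 0, ∀ x : ℝ, u θ x = φ θ x
  ext_zero : ∀ t > 0, ∀ x : ℝ, x ∉ Set.Ioo (g t) (h t) → u t x = 0

/-- `q ∈ C²([0,∞))` solves the semi-wave ODE (3.1) with speed `c` and delay `τ`:
`q'' - c q' - d q + f(q(· - cτ)) = 0` on `(0,∞)` and `q = 0` on `(-∞,0]`. -/
def SWode (d τ c : ℝ) (f : ℝ → ℝ) (q : ℝ → ℝ) : Prop :=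
  ContDiffOn ℝ 2 q (Set.Ici 0) ∧
  (∀ z > 0, deriv (deriv q) z - c * deriv q z - d * q z + f (q (z - c * τ)) = 0) ∧
  (∀ z ≤ 0, q z = 0)

/-- A positive solution of the semi-wave ODE (3.1). -/
def SWpos (d τ c : ℝ) (f : ℝ → ℝ) (q : ℝ → ℝ) : Prop :=
  SWode d τ c f q ∧ ∀ z > 0, 0 < q z

/-- `(c, q)` solves the full semi-wave problem (1.14):
positive solution of (3.1) with `q(∞) = u*` and the front condition `μ q'₊(0) = c`. -/
def SemiWave (d τ μ : ℝ) (f : ℝ → ℝ) (ustar c : ℝ) (q : ℝ → ℝ) : Prop :=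
  0 < c ∧ SWode d τ c f q ∧ (∀ z > 0, 0 < q z) ∧
  Filter.Tendsto q Filter.atTop (nhds ustar) ∧
  μ * derivWithin q (Set.Ici 0) 0 = c

/-- Spreading: `g(t) → -∞`, `h(t) → ∞` and `u(t,·) → u*` locally uniformly on `ℝ`. -/
def Spreading (ustar : ℝ) (u : ℝ → ℝ → ℝ) (g h : ℝ → ℝ) : Prop :=
  Filter.Tendsto g Filter.atTop Filter.atBot ∧
  Filter.Tendsto h Filter.atTop Filter.atTop ∧
  ∀ a b : ℝ, TendstoUniformlyOn (fun t x => u t x) (fun _ => ustar) Filter.atTop (Set.Icc a b)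

noncomputable section CharAux

/-- Imaginary part of the characteristic function at `x + i y`, with `r = c τ`. -/
def Gfun (a c r x y : ℝ) : ℝ :=
  (2 * x - c) * y - a * Real.exp (-(x * r)) * Real.sin (y * r)

lemma Gfun_strictMono (a c r : ℝ) (ha : 0 < a) (hr : 0 < r) {y : ℝ} (hy : 0 < y)
    (hs : 0 ≤ Real.sin (y * r)) : StrictMono (fun x => Gfun a c r x y) := by
  intro x₁ x₂ hx
  have h1 : (2 * x₁ - c) * y < (2 * x₂ - c) * y := by nlinarith
  have he : Real.exp (-(x₂ * r)) ≤ Real.exp (-(x₁ * r)) :=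
    Real.exp_le_exp.mpr (by nlinarith)
  have h2 : a * Real.exp (-(x₂ * r)) * Real.sin (y * r)
      ≤ a * Real.exp (-(x₁ * r)) * Real.sin (y * r) :=
    mul_le_mul_of_nonneg_right (mul_le_mul_of_nonneg_left he ha.le) hs
  simp only [Gfun]
  linarith

open Classical in
/-- The solution `x` of `Gfun a c r x y = 0`. -/
def Xfun (a c r y : ℝ) : ℝ :=
  if h : ∃ x, Gfun a c r x y = 0 then h.choose else 0

lemma Gfun_exists_root (a c r : ℝ) (ha : 0 < a) (hc : 0 < c) (hr : 0 < r) {y : ℝ}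
    (hy : y ∈ Set.Ioo 0 (Real.pi / r)) : ∃ x, Gfun a c r x y = 0 := by
  have hy0 : 0 < y := hy.1
  have hyr : 0 < y * r := mul_pos hy0 hr
  have hyrπ : y * r < Real.pi := by
    have := hy.2
    rw [lt_div_iff₀ hr] at this
    linarith
  have hsin : 0 < Real.sin (y * r) := Real.sin_pos_of_pos_of_lt_pi hyr hyrπ
  have hsin1 : Real.sin (y * r) ≤ 1 := Real.sin_le_one _
  set xb : ℝ := c / 2 + a / (2 * y) + 1 with hxb
  have hxbpos : 0 < xb := by positivity
  have hcont : ContinuousOn (fun x => Gfun a c r x y) (Set.Icc (c / 2) xb) := by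
    apply Continuous.continuousOn
    unfold Gfun
    continuity
  have hlow : Gfun a c r (c / 2) y < 0 := by
    have : (2 * (c / 2) - c) * y = 0 := by ring
    unfold Gfun
    rw [this]
    have hp : 0 < a * Real.exp (-(c / 2 * r)) * Real.sin (y * r) :=
      mul_pos (mul_pos ha (Real.exp_pos _)) hsin
    linarith
  have hhigh : 0 < Gfun a c r xb y := by
    have he : Real.exp (-(xb * r)) ≤ 1 := Real.exp_le_one_iff.mpr (by nlinarith)
    have hterm : a * Real.exp (-(xb * r)) * Real.sin (y * r) ≤ a := by
      have h0 : 0 < Real.exp (-(xb * r)) := Real.exp_pos _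
      have s1 : a * Real.exp (-(xb * r)) * Real.sin (y * r)
          ≤ a * Real.exp (-(xb * r)) * 1 :=
        mul_le_mul_of_nonneg_left hsin1 (by positivity)
      have s2 : a * Real.exp (-(xb * r)) ≤ a * 1 :=
        mul_le_mul_of_nonneg_left he ha.le
      nlinarith
    have hlin : (2 * xb - c) * y = a + 2 * y := by
      rw [hxb]
      have hyy : a / (2 * y) * (2 * y) = a := div_mul_cancel₀ a (by positivity)
      linear_combination hyy
    unfold Gfun
    rw [hlin]
    linarith
  have hle : c / 2 ≤ xb := by
    have h : 0 < a / (2 * y) := by positivity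
    simp only [hxb]
    linarith
  have : (0 : ℝ) ∈ Set.Icc (Gfun a c r (c / 2) y) (Gfun a c r xb y) :=
    ⟨le_of_lt hlow, le_of_lt hhigh⟩
  obtain ⟨x, _, hx⟩ := intermediate_value_Icc hle hcont this
  exact ⟨x, hx⟩

lemma Xfun_root (a c r : ℝ) (ha : 0 < a) (hc : 0 < c) (hr : 0 < r) {y : ℝ}
    (hy : y ∈ Set.Ioo 0 (Real.pi / r)) : Gfun a c r (Xfun a c r y) y = 0 := by
  have h := Gfun_exists_root a c r ha hc hr hy
  simp only [Xfun, dif_pos h]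
  exact h.choose_spec

lemma Xfun_gt (a c r : ℝ) (ha : 0 < a) (hc : 0 < c) (hr : 0 < r) {y : ℝ}
    (hy : y ∈ Set.Ioo 0 (Real.pi / r)) : c / 2 < Xfun a c r y := by
  have hy0 : 0 < y := hy.1
  have hyr : 0 < y * r := mul_pos hy0 hr
  have hyrπ : y * r < Real.pi := by
    have := hy.2; rw [lt_div_iff₀ hr] at this; linarith
  have hsin : 0 < Real.sin (y * r) := Real.sin_pos_of_pos_of_lt_pi hyr hyrπ
  have hmono := Gfun_strictMono a c r ha hr hy0 hsin.le
  have hroot := Xfun_root a c r ha hc hr hy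
  have hlow : Gfun a c r (c / 2) y < 0 := by
    have h0 : (2 * (c / 2) - c) * y = 0 := by ring
    unfold Gfun
    rw [h0]
    have hp : 0 < a * Real.exp (-(c / 2 * r)) * Real.sin (y * r) :=
      mul_pos (mul_pos ha (Real.exp_pos _)) hsin
    linarith
  by_contra h
  push_neg at h
  have := hmono.le_iff_le.mpr h
  rw [hroot] at this
  linarith

lemma Xfun_le (a c r : ℝ) (ha : 0 < a) (hc : 0 < c) (hr : 0 < r) {y : ℝ}
    (hy : y ∈ Set.Ioo 0 (Real.pi / r)) : Xfun a c r y ≤ (c + a * r) / 2 := by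
  have hy0 : 0 < y := hy.1
  have hyr : 0 < y * r := mul_pos hy0 hr
  have hroot := Xfun_root a c r ha hc hr hy
  set X := Xfun a c r y with hX
  have hXpos : 0 < X := lt_trans (by positivity) (Xfun_gt a c r ha hc hr hy)
  have he : Real.exp (-(X * r)) ≤ 1 := Real.exp_le_one_iff.mpr (by nlinarith)
  have he0 : 0 < Real.exp (-(X * r)) := Real.exp_pos _
  have hsin : Real.sin (y * r) ≤ y * r := Real.sin_le hyr.le
  have hsin0 : 0 ≤ Real.sin (y * r) := by
    have hyrπ : y * r < Real.pi := by
      have := hy.2; rw [lt_div_iff₀ hr] at this; linarith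
    exact (Real.sin_pos_of_pos_of_lt_pi hyr hyrπ).le
  unfold Gfun at hroot
  have s1 : a * Real.exp (-(X * r)) * Real.sin (y * r) ≤ a * Real.sin (y * r) := by
    have := mul_le_mul_of_nonneg_left he ha.le
    nlinarith
  have s2 : a * Real.sin (y * r) ≤ a * (y * r) := mul_le_mul_of_nonneg_left hsin ha.le
  have hcomb : (2 * X - c) * y ≤ a * (y * r) := by linarith
  nlinarith [hcomb, hy0, mul_pos hy0 hr]

lemma Xfun_continuousAt (a c r : ℝ) (ha : 0 < a) (hc : 0 < c) (hr : 0 < r) {y₀ : ℝ}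
    (hy₀ : y₀ ∈ Set.Ioo 0 (Real.pi / r)) : ContinuousAt (Xfun a c r) y₀ := by
  rw [Metric.continuousAt_iff]
  intro ε hε
  set x₀ := Xfun a c r y₀ with hx₀
  have hy₀0 : 0 < y₀ := hy₀.1
  have hyrπ : y₀ * r < Real.pi := by
    have := hy₀.2; rw [lt_div_iff₀ hr] at this; linarith
  have hsin : 0 < Real.sin (y₀ * r) :=
    Real.sin_pos_of_pos_of_lt_pi (mul_pos hy₀0 hr) hyrπ
  have hmono := Gfun_strictMono a c r ha hr hy₀0 hsin.le
  have hroot := Xfun_root a c r ha hc hr hy₀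
  have hneg : Gfun a c r (x₀ - ε / 2) y₀ < 0 := by
    have := hmono (show x₀ - ε / 2 < x₀ by linarith)
    simp only at this
    rw [hroot] at this
    exact this
  have hpos : 0 < Gfun a c r (x₀ + ε / 2) y₀ := by
    have := hmono (show x₀ < x₀ + ε / 2 by linarith)
    simp only at this
    rw [hroot] at this
    exact this
  have hcont1 : Continuous (fun y => Gfun a c r (x₀ - ε / 2) y) := by
    unfold Gfun; continuity
  have hcont2 : Continuous (fun y => Gfun a c r (x₀ + ε / 2) y) := by
    unfold Gfun; continuity
  have h1 : ∀ᶠ y in nhds y₀, Gfun a c r (x₀ - ε / 2) y < 0 :=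
    hcont1.continuousAt.eventually_lt continuousAt_const hneg
  have h2 : ∀ᶠ y in nhds y₀, 0 < Gfun a c r (x₀ + ε / 2) y :=
    continuousAt_const.eventually_lt hcont2.continuousAt hpos
  have h3 : ∀ᶠ y in nhds y₀, y ∈ Set.Ioo 0 (Real.pi / r) :=
    isOpen_Ioo.eventually_mem hy₀
  have hall := (h1.and (h2.and h3))
  rw [Metric.eventually_nhds_iff] at hall
  obtain ⟨δ, hδ, hδall⟩ := hall
  refine ⟨δ, hδ, fun y hyd => ?_⟩
  obtain ⟨hy1, hy2, hy3⟩ := hδall hyd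
  -- y ∈ Ioo, so Xfun a c r y is the root at y
  have hy0 : 0 < y := hy3.1
  have hyrπ' : y * r < Real.pi := by
    have := hy3.2; rw [lt_div_iff₀ hr] at this; linarith
  have hsiny : 0 < Real.sin (y * r) :=
    Real.sin_pos_of_pos_of_lt_pi (mul_pos hy0 hr) hyrπ'
  have hmonoy := Gfun_strictMono a c r ha hr hy0 hsiny.le
  have hrooty := Xfun_root a c r ha hc hr hy3
  have hlt1 : x₀ - ε / 2 < Xfun a c r y := by
    by_contra h
    push_neg at h
    have := hmonoy.le_iff_le.mpr h
    rw [hrooty] at this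
    linarith
  have hlt2 : Xfun a c r y < x₀ + ε / 2 := by
    by_contra h
    push_neg at h
    have := hmonoy.le_iff_le.mpr h
    rw [hrooty] at this
    linarith
  rw [Real.dist_eq, abs_lt]
  constructor <;> linarith

end CharAux

/-- Real part of the characteristic function along the curve `x = Xfun y`. -/
noncomputable def Rfun (a c d r y : ℝ) : ℝ :=
  (Xfun a c r y) ^ 2 - y ^ 2 - c * Xfun a c r y - d +
    a * Real.exp (-(Xfun a c r y * r)) * Real.cos (y * r)

lemma Rfun_continuousOn (a c d r : ℝ) (ha : 0 < a) (hc : 0 < c) (hr : 0 < r)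
    {s : Set ℝ} (hs : s ⊆ Set.Ioo 0 (Real.pi / r)) : ContinuousOn (Rfun a c d r) s := by
  have hXc : ContinuousOn (Xfun a c r) s := fun y hy =>
    (Xfun_continuousAt a c r ha hc hr (hs hy)).continuousWithinAt
  unfold Rfun
  apply ContinuousOn.add
  · apply ContinuousOn.sub
    apply ContinuousOn.sub
    apply ContinuousOn.sub (hXc.pow 2) ((continuous_id.pow 2).continuousOn)
    exact continuousOn_const.mul hXc
    exact continuousOn_const
  · exact (continuousOn_const.mul
      (Real.continuous_exp.comp_continuousOn (hXc.mul continuousOn_const).neg)).mul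
      (Real.continuous_cos.comp_continuousOn (continuousOn_id.mul continuousOn_const))

set_option maxHeartbeats 800000 in
/-- Lemma 3.2(ii): for `c ∈ (0, c₀(τ))` the characteristic equation
`Δ_c(λ,τ) = λ² - cλ - d + a e^{-λcτ} = 0` has a complex solution in the domain
`Ω = {λ : Re λ > 0, 0 < Im λ < π/(cτ)}`. -/
theorem characteristic_complex_root
    (d τ a c₀ : ℝ) (hd : 0 < d) (hτ : 0 < τ) (ha : d < a)
    (hc₀ : c₀ ∈ Set.Ioo 0 (2 * Real.sqrt (a - d)))
    (hchar : ∀ c : ℝ, 0 < c →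
      ((∃ lam : ℝ, 0 < lam ∧
          lam ^ 2 - c * lam - d + a * Real.exp (-(lam * c * τ)) = 0) ↔ c₀ ≤ c))
    (c : ℝ) (hc : c ∈ Set.Ioo 0 c₀) :
    ∃ lam : ℂ, 0 < lam.re ∧ 0 < lam.im ∧ lam.im < Real.pi / (c * τ) ∧
      lam ^ 2 - (c : ℂ) * lam - (d : ℂ) +
        (a : ℂ) * Complex.exp (-(lam * ((c : ℂ) * (τ : ℂ)))) = 0 := by
  obtain ⟨hc0, hcc0⟩ := hc
  have ha0 : 0 < a := lt_trans hd ha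
  obtain ⟨r, hrdef⟩ : ∃ r : ℝ, c * τ = r := ⟨_, rfl⟩
  have hr : 0 < r := hrdef ▸ mul_pos hc0 hτ
  have hπ : (0 : ℝ) < Real.pi := Real.pi_pos
  -- no positive real root since c < c₀
  have hnoroot : ∀ x : ℝ, 0 < x → x ^ 2 - c * x - d + a * Real.exp (-(x * r)) ≠ 0 := by
    intro x hx h
    have heq : x ^ 2 - c * x - d + a * Real.exp (-(x * c * τ)) = 0 := by
      rw [show x * c * τ = x * r by rw [← hrdef]; ring]; exact h
    have := (hchar c hc0).mp ⟨x, hx, heq⟩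
    linarith
  -- the real characteristic function is positive on [0, ∞)
  have hPcont : Continuous (fun x : ℝ => x ^ 2 - c * x - d + a * Real.exp (-(x * r))) := by
    apply Continuous.add
    · continuity
    · exact continuous_const.mul (Real.continuous_exp.comp (by continuity))
  have hPpos : ∀ x : ℝ, 0 ≤ x → 0 < x ^ 2 - c * x - d + a * Real.exp (-(x * r)) := by
    intro x hx
    have hP0 : (0:ℝ) ^ 2 - c * 0 - d + a * Real.exp (-(0 * r)) = a - d := by
      simp; ring
    rcases eq_or_lt_of_le hx with h0 | h0
    · rw [← h0, hP0]; linarith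
    by_contra hle
    push_neg at hle
    have hiv : (0 : ℝ) ∈ Set.Icc (x ^ 2 - c * x - d + a * Real.exp (-(x * r)))
        ((0:ℝ) ^ 2 - c * 0 - d + a * Real.exp (-(0 * r))) := ⟨hle, by rw [hP0]; linarith⟩
    obtain ⟨z, hz, hPz⟩ := intermediate_value_Icc' h0.le hPcont.continuousOn hiv
    simp only at hPz
    have hz0 : 0 < z := by
      rcases eq_or_lt_of_le hz.1 with h | h
      · exfalso; rw [← h, hP0] at hPz; linarith
      · exact h
    exact hnoroot z hz0 hPz
  -- minimum of P on [0, M]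
  obtain ⟨M, hMdef⟩ : ∃ M : ℝ, (c + a * r) / 2 = M := ⟨_, rfl⟩
  have hM0 : (0 : ℝ) ≤ M := by rw [← hMdef]; positivity
  obtain ⟨z₀, hz₀mem, hz₀min⟩ :=
    isCompact_Icc.exists_isMinOn (nonempty_Icc.mpr hM0) hPcont.continuousOn
  obtain ⟨m, hmdef⟩ : ∃ m : ℝ, z₀ ^ 2 - c * z₀ - d + a * Real.exp (-(z₀ * r)) = m := ⟨_, rfl⟩
  have hm : 0 < m := hmdef ▸ hPpos z₀ hz₀mem.1
  -- choice of y₂ near π / r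
  obtain ⟨ε, hεpos, hε2⟩ : ∃ ε : ℝ, 0 < ε ∧ ε ^ 2 = d / 4 := by
    refine ⟨Real.sqrt d / 2, ?_, ?_⟩
    · have := Real.sqrt_pos.mpr hd; positivity
    · rw [div_pow, Real.sq_sqrt hd.le]; norm_num
  obtain ⟨δ, hδpos, hδ1, hδ2⟩ : ∃ δ : ℝ, 0 < δ ∧ δ ≤ Real.pi / 4 ∧
      δ ≤ Real.pi * ε / (a * r) :=
    ⟨min (Real.pi / 4) (Real.pi * ε / (a * r)),
      lt_min (by positivity) (by positivity), min_le_left _ _, min_le_right _ _⟩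
  obtain ⟨y₂, hy₂r⟩ : ∃ y : ℝ, y * r = Real.pi - δ :=
    ⟨(Real.pi - δ) / r, by field_simp⟩
  have hy₂pos : 0 < y₂ := by
    by_contra h
    push_neg at h
    have : y₂ * r ≤ 0 := mul_nonpos_of_nonpos_of_nonneg h hr.le
    rw [hy₂r] at this
    linarith
  have hy₂lt : y₂ < Real.pi / r := by
    rw [lt_div_iff₀ hr]
    rw [hy₂r]
    linarith
  have hy₂mem : y₂ ∈ Set.Ioo 0 (Real.pi / r) := ⟨hy₂pos, hy₂lt⟩
  obtain ⟨X₂, hX₂def⟩ : ∃ x : ℝ, Xfun a c r y₂ = x := ⟨_, rfl⟩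
  have hX₂root := Xfun_root a c r ha0 hc0 hr hy₂mem
  have hX₂gt := Xfun_gt a c r ha0 hc0 hr hy₂mem
  rw [hX₂def] at hX₂root hX₂gt
  have hX₂pos : 0 < X₂ := lt_trans (by positivity) hX₂gt
  have hsin₂ : Real.sin (y₂ * r) = Real.sin δ := by rw [hy₂r, Real.sin_pi_sub]
  have hsinδ : Real.sin δ ≤ δ := Real.sin_le hδpos.le
  have hsinδ0 : 0 ≤ Real.sin δ :=
    Real.sin_nonneg_of_nonneg_of_le_pi hδpos.le (by linarith)
  have he₂ : Real.exp (-(X₂ * r)) ≤ 1 :=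
    Real.exp_le_one_iff.mpr (neg_nonpos.mpr (mul_pos hX₂pos hr).le)
  have he₂0 : 0 < Real.exp (-(X₂ * r)) := Real.exp_pos _
  have hstep : (2 * X₂ - c) * y₂ ≤ a * δ := by
    have h1 : a * Real.exp (-(X₂ * r)) * Real.sin (y₂ * r) ≤ a * Real.sin (y₂ * r) := by
      rw [hsin₂]
      have hone := mul_le_mul_of_nonneg_right
        (mul_le_mul_of_nonneg_left he₂ ha0.le) hsinδ0
      rw [mul_one] at hone
      exact hone
    have h2 : a * Real.sin (y₂ * r) ≤ a * δ := by
      rw [hsin₂]; exact mul_le_mul_of_nonneg_left hsinδ ha0.le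
    unfold Gfun at hX₂root
    linarith
  have hy₂low : Real.pi / (2 * r) ≤ y₂ := by
    rw [div_le_iff₀ (by positivity)]
    have h2 : y₂ * (2 * r) = 2 * (y₂ * r) := by ring
    rw [h2, hy₂r]
    linarith
  have haδ : a * δ ≤ Real.pi * ε / r := by
    calc a * δ ≤ a * (Real.pi * ε / (a * r)) := mul_le_mul_of_nonneg_left hδ2 ha0.le
      _ = Real.pi * ε / r := by field_simp
  have hX₂le : X₂ ≤ c / 2 + ε := by
    by_contra h
    push_neg at h
    have h2 : 2 * ε < 2 * X₂ - c := by linarith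
    have h3 : Real.pi * ε / r < (2 * X₂ - c) * y₂ := by
      calc Real.pi * ε / r = (2 * ε) * (Real.pi / (2 * r)) := by field_simp
        _ < (2 * X₂ - c) * y₂ := mul_lt_mul h2 hy₂low (by positivity) (by linarith)
    linarith
  have hcos₂ : Real.cos (y₂ * r) ≤ 0 := by
    rw [hy₂r, Real.cos_pi_sub]
    have : 0 ≤ Real.cos δ := Real.cos_nonneg_of_mem_Icc ⟨by linarith, by linarith⟩
    linarith
  have hR₂ : Rfun a c d r y₂ < 0 := by
    have hterm : a * Real.exp (-(X₂ * r)) * Real.cos (y₂ * r) ≤ 0 :=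
      mul_nonpos_of_nonneg_of_nonpos (by positivity) hcos₂
    have hX₂e : X₂ - c / 2 ≤ ε := by linarith
    have hsq := mul_le_mul hX₂e hX₂e (by linarith) hεpos.le
    have hq : X₂ ^ 2 - c * X₂ ≤ ε ^ 2 - c ^ 2 / 4 := by
      have hexp : (X₂ - c / 2) * (X₂ - c / 2) = X₂ ^ 2 - c * X₂ + c ^ 2 / 4 := by ring
      have hexp2 : ε * ε = ε ^ 2 := by ring
      linarith
    have hy₂sq : 0 < y₂ ^ 2 := by positivity
    unfold Rfun
    rw [hX₂def]
    linarith [sq_nonneg c]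
  -- choice of y₁ near 0
  have hφcont : ContinuousAt (fun y : ℝ => y ^ 2 + a * (1 - Real.cos (y * r))) 0 := by
    apply Continuous.continuousAt
    continuity
  rw [Metric.continuousAt_iff] at hφcont
  obtain ⟨δ₁, hδ₁pos, hφ⟩ := hφcont m hm
  obtain ⟨y₁, hy₁pos, hy₁ltδ₁, hy₁le⟩ : ∃ y : ℝ, 0 < y ∧ y < δ₁ ∧ y ≤ y₂ / 2 :=
    ⟨min (δ₁ / 2) (y₂ / 2), lt_min (by linarith) (by linarith),
      lt_of_le_of_lt (min_le_left _ _) (by linarith), min_le_right _ _⟩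
  have hy₁lt₂ : y₁ < y₂ := by linarith
  have hy₁mem : y₁ ∈ Set.Ioo 0 (Real.pi / r) := ⟨hy₁pos, lt_trans hy₁lt₂ hy₂lt⟩
  have hφy₁ : y₁ ^ 2 + a * (1 - Real.cos (y₁ * r)) < m := by
    have hd1 : dist y₁ 0 < δ₁ := by
      rw [Real.dist_eq, sub_zero, abs_of_pos hy₁pos]; exact hy₁ltδ₁
    have h := hφ hd1
    rw [Real.dist_eq] at h
    simp only [zero_mul, Real.cos_zero, sub_self, mul_zero, add_zero, ne_eq,
      OfNat.ofNat_ne_zero, not_false_eq_true, zero_pow, zero_add, sub_zero] at h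
    exact lt_of_le_of_lt (le_abs_self _) h
  obtain ⟨X₁, hX₁def⟩ : ∃ x : ℝ, Xfun a c r y₁ = x := ⟨_, rfl⟩
  have hX₁root := Xfun_root a c r ha0 hc0 hr hy₁mem
  have hX₁gt := Xfun_gt a c r ha0 hc0 hr hy₁mem
  have hX₁le := Xfun_le a c r ha0 hc0 hr hy₁mem
  rw [hX₁def] at hX₁root hX₁gt hX₁le
  rw [hMdef] at hX₁le
  have hX₁pos : 0 < X₁ := lt_trans (by positivity) hX₁gt
  have hmX₁ : m ≤ X₁ ^ 2 - c * X₁ - d + a * Real.exp (-(X₁ * r)) := by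
    rw [← hmdef]
    exact hz₀min ⟨hX₁pos.le, hX₁le⟩
  have hcos₁ : Real.cos (y₁ * r) ≤ 1 := Real.cos_le_one _
  have he₁ : Real.exp (-(X₁ * r)) ≤ 1 :=
    Real.exp_le_one_iff.mpr (neg_nonpos.mpr (mul_pos hX₁pos hr).le)
  have he₁0 : 0 < Real.exp (-(X₁ * r)) := Real.exp_pos _
  have hR₁ : 0 < Rfun a c d r y₁ := by
    have hkey : a * Real.exp (-(X₁ * r)) * (1 - Real.cos (y₁ * r)) ≤
        a * (1 - Real.cos (y₁ * r)) := by
      have hone := mul_le_mul_of_nonneg_right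
        (mul_le_mul_of_nonneg_left he₁ ha0.le)
        (by linarith : (0:ℝ) ≤ 1 - Real.cos (y₁ * r))
      rw [mul_one] at hone
      exact hone
    unfold Rfun
    rw [hX₁def]
    linarith [hmX₁, hφy₁, hkey]
  -- intermediate value theorem
  have hRcont : ContinuousOn (Rfun a c d r) (Set.Icc y₁ y₂) :=
    Rfun_continuousOn a c d r ha0 hc0 hr (fun y hy =>
      ⟨lt_of_lt_of_le hy₁pos hy.1, lt_of_le_of_lt hy.2 hy₂lt⟩)
  have h0mem : (0 : ℝ) ∈ Set.Icc (Rfun a c d r y₂) (Rfun a c d r y₁) := ⟨hR₂.le, hR₁.le⟩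
  obtain ⟨ys, hysmem, hyseq⟩ := intermediate_value_Icc' hy₁lt₂.le hRcont h0mem
  have hysIoo : ys ∈ Set.Ioo 0 (Real.pi / r) :=
    ⟨lt_of_lt_of_le hy₁pos hysmem.1, lt_of_le_of_lt hysmem.2 hy₂lt⟩
  obtain ⟨X, hXdef⟩ : ∃ x : ℝ, Xfun a c r ys = x := ⟨_, rfl⟩
  have hroot := Xfun_root a c r ha0 hc0 hr hysIoo
  have hXgt := Xfun_gt a c r ha0 hc0 hr hysIoo
  rw [hXdef] at hroot hXgt
  have hXpos : 0 < X := lt_trans (by positivity) hXgt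
  refine ⟨⟨X, ys⟩, hXpos, hysIoo.1, hrdef ▸ hysIoo.2, ?_⟩
  have him : (2 * X - c) * ys - a * Real.exp (-(X * r)) * Real.sin (ys * r) = 0 := hroot
  have hre : X ^ 2 - ys ^ 2 - c * X - d + a * Real.exp (-(X * r)) * Real.cos (ys * r) = 0 := by
    have h := hyseq
    unfold Rfun at h
    rw [hXdef] at h
    exact h
  rw [← hrdef] at him hre
  rw [Complex.ext_iff]
  constructor
  · simp only [Complex.add_re, Complex.sub_re, Complex.mul_re, Complex.exp_re,
      Complex.neg_re, Complex.neg_im, Complex.mul_im, Complex.ofReal_re, Complex.ofReal_im,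
      Complex.zero_re, mul_zero, zero_mul, sub_zero, add_zero, zero_add, pow_two,
      Real.cos_neg, Real.sin_neg]
    linear_combination hre
  · simp only [Complex.add_im, Complex.sub_im, Complex.mul_im, Complex.exp_im,
      Complex.neg_re, Complex.neg_im, Complex.mul_re, Complex.ofReal_re, Complex.ofReal_im,
      Complex.zero_im, mul_zero, zero_mul, sub_zero, add_zero, zero_add, pow_two,
      Real.cos_neg, Real.sin_neg]
    linear_combination him
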